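/- Let H be a finite-dimensional real inner product space of dimension ≥ 2, let f : H → ℝ be a nonzero linear functional, and let v ∈ H be a vector with f(v) = 1. Let P : H → H be the projection onto K := ker f along v, i.e. P(x) := x − f(x)·v. Let θ ∈ [0, π/2) be determined by cos θ = |⟨v/‖v‖, w⟩| where w is a unit vector orthogonal to K. Then the operator norm of P equals 1 / cos θ. -/

import Mathlib

open RealInnerProductSpace

set_option maxHeartbeats 2000000 in
/-- The norm of the projection onto the hyperplane `K = ker f` along a vector `v` with
`f v = 1` equals `1 / cos θ`, where `θ` is the angle between `v` and `K^⊥`. -/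
theorem norm_projection_along_vector
    {H : Type*} [NormedAddCommGroup H] [InnerProductSpace ℝ H] [FiniteDimensional ℝ H]
    (hdim : 2 ≤ Module.finrank ℝ H)
    (f : H →ₗ[ℝ] ℝ) (hf : f ≠ 0) (v : H) (hfv : f v = 1)
    (P : H →L[ℝ] H) (hP : ∀ x, P x = x - f x • v)
    (w : H) (hw : ‖w‖ = 1) (hwK : w ∈ (LinearMap.ker f)ᗮ)
    (θ : ℝ) (hθ : θ ∈ Set.Ico 0 (Real.pi / 2))
    (hcos : Real.cos θ = |(inner ℝ ((‖v‖⁻¹ : ℝ) • v) w : ℝ)|) :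
    ‖P‖ = 1 / Real.cos θ := by
  have hww : (inner ℝ w w : ℝ) = 1 := by
    rw [real_inner_self_eq_norm_sq, hw]; norm_num
  set a : ℝ := inner ℝ v w with ha
  -- key identity: ⟪x, w⟫ = f x * a
  have key : ∀ x : H, (inner ℝ x w : ℝ) = f x * a := by
    intro x
    have hx : x - f x • v ∈ LinearMap.ker f := by
      simp [LinearMap.mem_ker, hfv]
    have h0 : (inner ℝ (x - f x • v) w : ℝ) = 0 := hwK _ hx
    rw [inner_sub_left, real_inner_smul_left] at h0
    linarith
  have ha0 : a ≠ 0 := by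
    intro h
    have := key w
    rw [hww, h, mul_zero] at this
    norm_num at this
  have hv0 : v ≠ 0 := by
    intro h; rw [h] at hfv; simp at hfv
  have hnv : (0:ℝ) < ‖v‖ := norm_pos_iff.mpr hv0
  -- cos θ = |a| / ‖v‖
  have hC : Real.cos θ = |a| / ‖v‖ := by
    rw [hcos, real_inner_smul_left, abs_mul, abs_inv, abs_norm, ← ha]
    rw [inv_mul_eq_div]
  have hcosθpos : 0 < Real.cos θ := by
    apply Real.cos_pos_of_mem_Ioo
    constructor
    · linarith [hθ.1, Real.pi_pos]
    · exact hθ.2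
  have habs : 0 < |a| := abs_pos.mpr ha0
  -- the vector u = w - a⁻¹ • v
  set u : H := w - a⁻¹ • v with hu
  have hwv : (inner ℝ w v : ℝ) = a := by rw [real_inner_comm]
  have huw : (inner ℝ u w : ℝ) = 0 := by
    rw [hu, inner_sub_left, real_inner_smul_left, hww, ← ha]
    field_simp
    ring
  have hu2 : ‖u‖^2 = ‖v‖^2 / a^2 - 1 := by
    have h1 : ‖u‖^2 = ‖w‖^2 - 2 * (inner ℝ w (a⁻¹ • v) : ℝ) + ‖a⁻¹ • v‖^2 := by
      rw [hu]; exact norm_sub_sq_real w (a⁻¹ • v)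
    rw [real_inner_smul_right, hwv, norm_smul, mul_pow, hw] at h1
    rw [h1]
    have : ‖a⁻¹‖^2 = a⁻¹^2 := by
      rw [Real.norm_eq_abs, sq_abs]
    rw [this]
    field_simp
    ring
  set C : ℝ := ‖v‖ / |a| with hCdef
  have hCpos : 0 < C := div_pos hnv habs
  have hC2 : C^2 = 1 + ‖u‖^2 := by
    rw [hCdef, hu2, div_pow, sq_abs]
    field_simp
    ring
  -- decomposition of P x
  have hPdec : ∀ x : H, P x = (x - (inner ℝ x w : ℝ) • w) + (inner ℝ x w : ℝ) • u := by
    intro x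
    rw [hP, key x, hu]
    match_scalars <;> field_simp <;> ring
  -- upper bound
  have hbound : ∀ x : H, ‖P x‖ ≤ C * ‖x‖ := by
    intro x
    set t : ℝ := inner ℝ x w with ht
    set k : H := x - t • w with hk
    have hkw : (inner ℝ k w : ℝ) = 0 := by
      rw [hk, inner_sub_left, real_inner_smul_left, hww, ← ht]; ring
    have hx2 : ‖x‖^2 = ‖k‖^2 + t^2 := by
      have hxk : x = k + t • w := by rw [hk]; abel
      rw [hxk, norm_add_sq_real, real_inner_smul_right, hkw, norm_smul, mul_pow, hw,
        Real.norm_eq_abs, sq_abs]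
      ring
    have hPx : ‖P x‖ ≤ ‖k‖ + |t| * ‖u‖ := by
      rw [hPdec x, ← ht, ← hk]
      calc ‖k + t • u‖ ≤ ‖k‖ + ‖t • u‖ := norm_add_le _ _
        _ = ‖k‖ + |t| * ‖u‖ := by rw [norm_smul, Real.norm_eq_abs]
    have hsq : (‖k‖ + |t| * ‖u‖)^2 ≤ C^2 * ‖x‖^2 := by
      rw [hC2, hx2]
      nlinarith [sq_nonneg (‖k‖ * ‖u‖ - |t|), sq_abs t, abs_nonneg t,
        norm_nonneg k, norm_nonneg u]
    have hPx2 : ‖P x‖^2 ≤ C^2 * ‖x‖^2 := le_trans (pow_le_pow_left₀ (norm_nonneg _) hPx 2) hsq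
    have h2 : 0 ≤ C * ‖x‖ := mul_nonneg hCpos.le (norm_nonneg x)
    nlinarith [norm_nonneg (P x)]
  have hub : ‖P‖ ≤ C := P.opNorm_le_bound hCpos.le hbound
  -- lower bound
  have hlb : C ≤ ‖P‖ := by
    by_cases hu0 : u = 0
    · -- then C = 1 and P is the orthogonal projection onto wᗮ
      have hC1 : C = 1 := by
        have : ‖u‖^2 = 0 := by rw [hu0]; simp
        rw [hu2] at this
        have hva : ‖v‖^2 = a^2 := by
          field_simp at this
          linarith
        have : ‖v‖ = |a| := by
          rw [← Real.sqrt_sq hnv.le, hva, Real.sqrt_sq_eq_abs]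
        rw [hCdef, this, div_self habs.ne']
      -- find a nonzero vector orthogonal to w
      have hwne : w ≠ 0 := by
        intro h; rw [h, norm_zero] at hw; norm_num at hw
      have hspan : Module.finrank ℝ (ℝ ∙ w) = 1 := finrank_span_singleton hwne
      have horth : (ℝ ∙ w)ᗮ ≠ ⊥ := by
        intro h
        have := Submodule.finrank_add_finrank_orthogonal (K := ℝ ∙ w)
        rw [h, hspan, finrank_bot] at this
        omega
      obtain ⟨z, hz, hz0⟩ := Submodule.ne_bot_iff _ |>.mp horth
      have hzw : (inner ℝ z w : ℝ) = 0 := by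
        have := hz w (Submodule.mem_span_singleton_self w)
        rwa [real_inner_comm] at this
      have hPz : P z = z := by
        rw [hPdec z, hzw]; simp
      have := P.le_opNorm z
      rw [hPz] at this
      have hnz : 0 < ‖z‖ := norm_pos_iff.mpr hz0
      rw [hC1]
      apply le_of_mul_le_mul_right _ hnz
      rw [one_mul]
      exact this
    · -- witness x₀ = u + ‖u‖² • w
      have hnu : 0 < ‖u‖ := norm_pos_iff.mpr hu0
      obtain ⟨x₀, hx₀⟩ : ∃ y : H, y = u + ‖u‖^2 • w := ⟨_, rfl⟩
      have htx : (inner ℝ x₀ w : ℝ) = ‖u‖^2 := by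
        rw [hx₀, inner_add_left, real_inner_smul_left, huw, hww]; ring
      have hPx₀ : P x₀ = (1 + ‖u‖^2) • u := by
        rw [hPdec x₀, htx, hx₀]
        rw [add_smul, one_smul]
        abel
      have hnPx₀ : ‖P x₀‖ = (1 + ‖u‖^2) * ‖u‖ := by
        rw [hPx₀, norm_smul, Real.norm_eq_abs, abs_of_pos (by positivity)]
      have hnx₀ : ‖x₀‖^2 = ‖u‖^2 * (1 + ‖u‖^2) := by
        rw [hx₀, norm_add_sq_real, real_inner_smul_right, huw, norm_smul, mul_pow,
          Real.norm_eq_abs, sq_abs, hw]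
        ring
      have hle := P.le_opNorm x₀
      have hx₀pos : 0 < ‖x₀‖ := by
        have hne : x₀ ≠ 0 := by
          intro h
          rw [h, inner_zero_left] at htx
          nlinarith
        exact norm_pos_iff.mpr hne
      -- C * ‖x₀‖ = ‖P x₀‖
      have hCeq : C * ‖x₀‖ = ‖P x₀‖ := by
        have h1 : (C * ‖x₀‖)^2 = ‖P x₀‖^2 := by
          rw [mul_pow, hC2, hnx₀, hnPx₀]
          ring
        have h2 : 0 ≤ C * ‖x₀‖ := mul_nonneg hCpos.le (norm_nonneg x₀)
        nlinarith [norm_nonneg (P x₀)]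
      rw [← hCeq] at hle
      exact le_of_mul_le_mul_right hle hx₀pos
  have : ‖P‖ = C := le_antisymm hub hlb
  rw [this, hC, one_div_div]
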